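/- Let S > 0 and r > 0, and let u₀ : ℝ → ℝ be a twice continuously differentiable function satisfying u₀''(x) + S·f(u₀(x)) + (2S/r)(2u₀(x)−1)(u₀'(x))² = 0 on ℝ with lim_{x→−∞} u₀(x) = 1, lim_{x→+∞} u₀(x) = 0, and lim_{x→±∞} u₀'(x) = 0. Then for every x ∈ ℝ, (u₀'(x))² = (r²/(8S))·e^{(4S/r)(u₀(x) − u₀(x)²)} − (r/2)·(u₀(x) − u₀(x)²) − r²/(8S). -/

import Mathlib

open Real Filter Topology

noncomputable def fpoly (u : ℝ) : ℝ := u * (2 * u - 1) * (1 - u)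

theorem first_integral (S r : ℝ) (hS : 0 < S) (hr : 0 < r)
    (u₀ : ℝ → ℝ) (hu : ContDiff ℝ 2 u₀)
    (hode : ∀ x : ℝ, deriv (deriv u₀) x + S * fpoly (u₀ x)
      + (2 * S / r) * (2 * u₀ x - 1) * (deriv u₀ x) ^ 2 = 0)
    (hlim1 : Tendsto u₀ atBot (𝓝 1)) (hlim0 : Tendsto u₀ atTop (𝓝 0))
    (hlim1' : Tendsto (deriv u₀) atBot (𝓝 0))
    (hlim0' : Tendsto (deriv u₀) atTop (𝓝 0)) :
    ∀ x : ℝ, (deriv u₀ x) ^ 2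
      = r ^ 2 / (8 * S) * Real.exp ((4 * S / r) * (u₀ x - (u₀ x) ^ 2))
        - r / 2 * (u₀ x - (u₀ x) ^ 2) - r ^ 2 / (8 * S) := by
  have hdiff : Differentiable ℝ u₀ := hu.differentiable (by norm_num)
  have hdiff' : Differentiable ℝ (deriv u₀) := by
    have hu2 : ContDiff ℝ ((1 : ℕ) + 1) u₀ := by exact_mod_cast hu
    rw [contDiff_succ_iff_deriv] at hu2
    exact hu2.2.2.differentiable (by norm_num)
  have hp : ∀ x, HasDerivAt u₀ (deriv u₀ x) x := fun x => (hdiff x).hasDerivAt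
  have hp' : ∀ x, HasDerivAt (deriv u₀) (deriv (deriv u₀) x) x :=
    fun x => (hdiff' x).hasDerivAt
  set G : ℝ → ℝ := fun x =>
    ((deriv u₀ x) ^ 2 + r / 2 * (u₀ x - (u₀ x) ^ 2) + r ^ 2 / (8 * S)) *
      Real.exp (-(4 * S / r * (u₀ x - (u₀ x) ^ 2))) with hGdef
  have hq : ∀ x, HasDerivAt (fun x => u₀ x - (u₀ x) ^ 2)
      (deriv u₀ x - 2 * u₀ x ^ 1 * deriv u₀ x) x :=
    fun x => (hp x).sub ((hp x).pow 2)
  have hG : ∀ x, HasDerivAt G 0 x := by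
    intro x
    have hA : HasDerivAt (fun x => (deriv u₀ x) ^ 2 + r / 2 * (u₀ x - (u₀ x) ^ 2)
        + r ^ 2 / (8 * S))
        (2 * deriv u₀ x ^ 1 * deriv (deriv u₀) x
          + r / 2 * (deriv u₀ x - 2 * u₀ x ^ 1 * deriv u₀ x)) x :=
      (((hp' x).pow 2).add ((hq x).const_mul (r / 2))).add_const _
    have hB : HasDerivAt (fun x => Real.exp (-(4 * S / r * (u₀ x - (u₀ x) ^ 2))))
        (Real.exp (-(4 * S / r * (u₀ x - (u₀ x) ^ 2))) *
          (-(4 * S / r * (deriv u₀ x - 2 * u₀ x ^ 1 * deriv u₀ x)))) x :=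
      (((hq x).const_mul (4 * S / r)).neg).exp
    have h := hA.mul hB
    refine h.congr_deriv ?_
    symm
    have hd : deriv (deriv u₀) x = -(S * fpoly (u₀ x))
        - (2 * S / r) * (2 * u₀ x - 1) * (deriv u₀ x) ^ 2 := by
      have := hode x; linarith
    rw [hd]
    simp only [fpoly]
    field_simp
    ring
  have hconst : ∀ x y, G x = G y := fun x y =>
    is_const_of_deriv_eq_zero (fun z => (hG z).differentiableAt)
      (fun z => (hG z).deriv) x y
  have hqlim : Tendsto (fun x => u₀ x - (u₀ x) ^ 2) atTop (𝓝 0) := by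
    have := hlim0.sub (hlim0.pow 2)
    simpa using this
  have hGlim : Tendsto G atTop (𝓝 (r ^ 2 / (8 * S))) := by
    have h1 : Tendsto (fun x => (deriv u₀ x) ^ 2 + r / 2 * (u₀ x - (u₀ x) ^ 2)
        + r ^ 2 / (8 * S)) atTop (𝓝 (r ^ 2 / (8 * S))) := by
      have := ((hlim0'.pow 2).add (hqlim.const_mul (r / 2))).add_const (r ^ 2 / (8 * S))
      simpa using this
    have h3 : Tendsto (fun x => -(4 * S / r * (u₀ x - (u₀ x) ^ 2))) atTop (𝓝 0) := by
      have := (hqlim.const_mul (4 * S / r)).neg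
      simpa using this
    have h2 : Tendsto (fun x => Real.exp (-(4 * S / r * (u₀ x - (u₀ x) ^ 2))))
        atTop (𝓝 1) := by
      have := (Real.continuous_exp.tendsto 0).comp h3
      simpa [Function.comp_def] using this
    have := h1.mul h2
    simpa using this
  intro x
  have hGx : G x = r ^ 2 / (8 * S) := by
    have hGc : Tendsto G atTop (𝓝 (G x)) := by
      have : G = fun _ => G x := funext fun y => hconst y x
      rw [this]; exact tendsto_const_nhds
    exact tendsto_nhds_unique hGc hGlim
  set E : ℝ := Real.exp (4 * S / r * (u₀ x - (u₀ x) ^ 2)) with hE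
  have hEne : E ≠ 0 := Real.exp_ne_zero _
  have hGx' : ((deriv u₀ x) ^ 2 + r / 2 * (u₀ x - (u₀ x) ^ 2) + r ^ 2 / (8 * S)) *
      E⁻¹ = r ^ 2 / (8 * S) := by
    rw [hE, ← Real.exp_neg]; exact hGx
  have h4 := congrArg (· * E) hGx'
  rw [mul_assoc, inv_mul_cancel₀ hEne, mul_one] at h4
  linarith
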